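/- Let Z = ∫ N(μ,Σ)(x) exp(f(μ) + (x-μ)ᵀ∇f(μ)) dx be the normalizing constant of the first-order tilted Gaussian with g = ∇f(μ). If |f(x) - f(μ) - (x-μ)ᵀ g| ≤ (M/2)‖x-μ‖² for all x, then the true normalizing constant Z* = ∫ N(μ,Σ)(x) exp(f(x)) dx satisfies Z · E[exp(-(M/2)‖X-μ‖²)] ≤ Z* ≤ Z · E[exp((M/2)‖X-μ‖²)] where X ~ tilted Gaussian N(μ+Σg, Σ), provided M‖Σ‖ < 1 so the upper expectation is finite. -/

import Mathlib

open Matrix MeasureTheory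

/-- Multivariate Gaussian density `N(μ, S)` on `ℝ^n`. -/
noncomputable def gaussPdf {n : ℕ} (S : Matrix (Fin n) (Fin n) ℝ)
    (μ x : Fin n → ℝ) : ℝ :=
  (2 * Real.pi) ^ (-(n : ℝ) / 2) * S.det ^ (-(1 : ℝ) / 2) *
    Real.exp (-(1/2) * ((x - μ) ⬝ᵥ (S⁻¹ *ᵥ (x - μ))))

open scoped MatrixOrder in
noncomputable def Matrix.PosSemidef.sqrt {n : ℕ} {S : Matrix (Fin n) (Fin n) ℝ}
    (_h : S.PosSemidef) : Matrix (Fin n) (Fin n) ℝ := CFC.sqrt S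

open scoped MatrixOrder in
lemma Matrix.PosSemidef.posSemidef_sqrt {n : ℕ} {S : Matrix (Fin n) (Fin n) ℝ}
    (h : S.PosSemidef) : h.sqrt.PosSemidef := (CFC.sqrt_nonneg S).posSemidef

open scoped MatrixOrder in
lemma Matrix.PosSemidef.sqrt_mul_self {n : ℕ} {S : Matrix (Fin n) (Fin n) ℝ}
    (h : S.PosSemidef) : h.sqrt * h.sqrt = S := CFC.sqrt_mul_sqrt_self S h.nonneg

namespace Stmt19

variable {n : ℕ}

lemma subst_integral (A : Matrix (Fin n) (Fin n) ℝ) (hA : A.det ≠ 0) (m : Fin n → ℝ)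
    (F : (Fin n → ℝ) → ℝ) :
    (∫ x, F x) = |A.det| * ∫ y, F (m + A *ᵥ y) := by
  have hi : Invertible A := A.invertibleOfIsUnitDet (isUnit_iff_ne_zero.mpr hA)
  let eL : (Fin n → ℝ) ≃ₗ[ℝ] (Fin n → ℝ) := Matrix.toLinearEquiv' A hi
  let eM : (Fin n → ℝ) ≃ᵐ (Fin n → ℝ) :=
    eL.toContinuousLinearEquiv.toHomeomorph.toMeasurableEquiv
  have hcoe : ⇑eM = ⇑(Matrix.toLin' A) := rfl
  have hmap : Measure.map (⇑eM) volume
      = ENNReal.ofReal |(A.det)⁻¹| • (volume : Measure (Fin n → ℝ)) := by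
    rw [hcoe]
    have := MeasureTheory.Measure.map_linearMap_addHaar_pi_eq_smul_addHaar
      (f := Matrix.toLin' A) (by rwa [LinearMap.det_toLin']) (volume : Measure (Fin n → ℝ))
    rwa [LinearMap.det_toLin'] at this
  have h1 : ∫ y, F (m + A *ᵥ y) = ∫ y, F (m + eM y) := by
    simp [hcoe, Matrix.toLin'_apply]
  have h2 : ∫ y, F (m + eM y) = ∫ z, F (m + z) ∂(Measure.map (⇑eM) volume) :=
    (integral_map_equiv eM (fun z => F (m + z))).symm
  rw [h1, h2, hmap, integral_smul_measure, integral_add_left_eq_self (fun z => F z) m]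
  rw [ENNReal.toReal_ofReal (abs_nonneg _), abs_inv, smul_eq_mul, ← mul_assoc,
    mul_inv_cancel₀ (by simpa using hA), one_mul]

lemma subst_integrable (A : Matrix (Fin n) (Fin n) ℝ) (hA : A.det ≠ 0) (m : Fin n → ℝ)
    (F : (Fin n → ℝ) → ℝ) :
    Integrable F ↔ Integrable (fun y => F (m + A *ᵥ y)) := by
  have hi : Invertible A := A.invertibleOfIsUnitDet (isUnit_iff_ne_zero.mpr hA)
  let eL : (Fin n → ℝ) ≃ₗ[ℝ] (Fin n → ℝ) := Matrix.toLinearEquiv' A hi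
  let eM : (Fin n → ℝ) ≃ᵐ (Fin n → ℝ) :=
    eL.toContinuousLinearEquiv.toHomeomorph.toMeasurableEquiv
  have hcoe : ⇑eM = ⇑(Matrix.toLin' A) := rfl
  have hmap : Measure.map (⇑eM) volume
      = ENNReal.ofReal |(A.det)⁻¹| • (volume : Measure (Fin n → ℝ)) := by
    rw [hcoe]
    have := MeasureTheory.Measure.map_linearMap_addHaar_pi_eq_smul_addHaar
      (f := Matrix.toLin' A) (by rwa [LinearMap.det_toLin']) (volume : Measure (Fin n → ℝ))
    rwa [LinearMap.det_toLin'] at this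
  constructor
  · intro h
    have h1 : Integrable (fun z => F (m + z)) := h.comp_add_left m
    have h2 : Integrable (fun z => F (m + z)) (Measure.map (⇑eM) volume) := by
      rw [hmap, integrable_smul_measure (by simp [hA]) (by simp)]
      exact h1
    have h3 := (integrable_map_equiv eM (fun z => F (m + z))).mp h2
    simpa [hcoe, Function.comp_def, Matrix.toLin'_apply] using h3
  · intro h
    have h3 : Integrable ((fun z => F (m + z)) ∘ ⇑eM) := by
      simpa [hcoe, Function.comp_def, Matrix.toLin'_apply] using h
    have h2 := (integrable_map_equiv eM (fun z => F (m + z))).mpr h3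
    rw [hmap, integrable_smul_measure (by simp [hA]) (by simp)] at h2
    simpa using h2.comp_add_left (-m)

lemma prod_exp_eq {c : ℝ} (y : Fin n → ℝ) :
    Real.exp (-c * (y ⬝ᵥ y)) = ∏ i, Real.exp (-c * (y i)^2) := by
  rw [← Real.exp_sum, dotProduct, Finset.mul_sum]
  congr 1
  exact Finset.sum_congr rfl (fun i _ => by ring)

lemma integrable_std {c : ℝ} (hc : 0 < c) :
    Integrable (fun y : Fin n → ℝ => Real.exp (-c * (y ⬝ᵥ y))) := by
  simp_rw [prod_exp_eq]
  exact Integrable.fintype_prod (fun i => integrable_exp_neg_mul_sq hc)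

lemma integral_std : ∫ y : Fin n → ℝ, Real.exp (-(2⁻¹ : ℝ) * (y ⬝ᵥ y))
    = (2 * Real.pi) ^ ((n : ℝ)/2) := by
  simp_rw [prod_exp_eq]
  rw [MeasureTheory.integral_fintype_prod_volume_eq_pow (ι := Fin n)
    (f := fun t : ℝ => Real.exp (-(2⁻¹:ℝ) * t^2)), integral_gaussian]
  rw [Fintype.card_fin, Real.sqrt_eq_rpow, ← Real.rpow_natCast (_ ^ (1/2:ℝ)) n,
    ← Real.rpow_mul (by positivity)]
  norm_num
  rw [div_div_eq_mul_div, div_one, mul_comm (2:ℝ), mul_comm (1/2:ℝ)]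
  norm_num
  rw [mul_one_div]

lemma symm_mulVec_dot {B : Matrix (Fin n) (Fin n) ℝ} (hB : B.IsSymm) (v w : Fin n → ℝ) :
    (B *ᵥ v) ⬝ᵥ w = v ⬝ᵥ (B *ᵥ w) := by
  rw [dotProduct_comm, dotProduct_mulVec, ← Matrix.mulVec_transpose, hB.eq, dotProduct_comm]

lemma sqrt_isSymm (S : Matrix (Fin n) (Fin n) ℝ) (hpd : S.PosDef) :
    hpd.posSemidef.sqrt.IsSymm := by
  have := hpd.posSemidef.posSemidef_sqrt.isHermitian
  rwa [Matrix.IsHermitian, conjTranspose_eq_transpose_of_trivial] at this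

lemma sqrt_det_ne (S : Matrix (Fin n) (Fin n) ℝ) (hpd : S.PosDef) :
    hpd.posSemidef.sqrt.det ≠ 0 := by
  intro h
  have h2 : hpd.posSemidef.sqrt.det * hpd.posSemidef.sqrt.det = S.det := by
    rw [← det_mul, Matrix.PosSemidef.sqrt_mul_self]
  rw [h, mul_zero] at h2
  exact absurd h2.symm (ne_of_gt hpd.det_pos)

lemma sqrt_abs_det (S : Matrix (Fin n) (Fin n) ℝ) (hpd : S.PosDef) :
    |hpd.posSemidef.sqrt.det| = Real.sqrt S.det := by
  have h2 : hpd.posSemidef.sqrt.det * hpd.posSemidef.sqrt.det = S.det := by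
    rw [← det_mul, Matrix.PosSemidef.sqrt_mul_self]
  nlinarith [Real.sq_sqrt hpd.det_pos.le, Real.sqrt_nonneg S.det,
    abs_nonneg hpd.posSemidef.sqrt.det, sq_abs hpd.posSemidef.sqrt.det]

lemma sqrt_inv_sqrt (S : Matrix (Fin n) (Fin n) ℝ) (hpd : S.PosDef) :
    hpd.posSemidef.sqrt * S⁻¹ * hpd.posSemidef.sqrt = 1 := by
  set A := hpd.posSemidef.sqrt with hA
  have hAA : A * A = S := hpd.posSemidef.sqrt_mul_self
  have hdetA : A.det ≠ 0 := sqrt_det_ne S hpd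
  have hSinv : S⁻¹ = A⁻¹ * A⁻¹ := by rw [← hAA, Matrix.mul_inv_rev]
  rw [hSinv, ← Matrix.mul_assoc, Matrix.mul_nonsing_inv _ (isUnit_iff_ne_zero.mpr hdetA),
    Matrix.one_mul, Matrix.nonsing_inv_mul _ (isUnit_iff_ne_zero.mpr hdetA)]

lemma dot_self_nonneg' (v : Fin n → ℝ) : 0 ≤ v ⬝ᵥ v :=
  Finset.sum_nonneg fun _ _ => mul_self_nonneg _

lemma dot_S_le (S : Matrix (Fin n) (Fin n) ℝ) (y : Fin n → ℝ) :
    y ⬝ᵥ (S *ᵥ y) ≤ ‖Matrix.toEuclideanCLM (𝕜 := ℝ) S‖ * (y ⬝ᵥ y) := by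
  set T := Matrix.toEuclideanCLM (𝕜 := ℝ) S with hT
  set y' : EuclideanSpace ℝ (Fin n) := (WithLp.equiv 2 _).symm y with hy'
  have h1 : y ⬝ᵥ (S *ᵥ y) = inner ℝ y' (T y') := by
    rw [EuclideanSpace.inner_eq_star_dotProduct, Matrix.ofLp_toEuclideanCLM]
    simp [hy', dotProduct_comm]
  have h2 : y ⬝ᵥ y = inner ℝ y' y' := by
    rw [EuclideanSpace.inner_eq_star_dotProduct]; simp [hy']
  have h3 : inner ℝ y' (T y') ≤ ‖y'‖ * ‖T y'‖ := real_inner_le_norm _ _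
  have h4 : ‖T y'‖ ≤ ‖T‖ * ‖y'‖ := T.le_opNorm y'
  have h5 : (inner ℝ y' y' : ℝ) = ‖y'‖ ^ 2 := real_inner_self_eq_norm_sq y'
  rw [h1, h2, h5]
  nlinarith [norm_nonneg y', norm_nonneg (T y'), norm_nonneg T]

lemma cross_le (a b : Fin n → ℝ) {t : ℝ} (ht : 0 < t) :
    2 * (a ⬝ᵥ b) ≤ t * (a ⬝ᵥ a) + t⁻¹ * (b ⬝ᵥ b) := by
  simp only [dotProduct, Finset.mul_sum, ← Finset.sum_add_distrib]
  apply Finset.sum_le_sum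
  intro i _
  nlinarith [sq_nonneg (t * a i - b i), mul_pos ht ht, mul_inv_cancel₀ (ne_of_gt ht),
    sq_nonneg (a i), sq_nonneg (b i)]

lemma cont_dot {f g : (Fin n → ℝ) → (Fin n → ℝ)} (hf : Continuous f) (hg : Continuous g) :
    Continuous fun x => f x ⬝ᵥ g x := by
  simp only [dotProduct]
  exact continuous_finset_sum _ fun i _ =>
    ((continuous_apply i).comp hf).mul ((continuous_apply i).comp hg)

lemma cont_gaussPdf (S : Matrix (Fin n) (Fin n) ℝ) (m : Fin n → ℝ) :
    Continuous (gaussPdf S m) := by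
  unfold gaussPdf
  exact continuous_const.mul (Real.continuous_exp.comp (continuous_const.mul
    (cont_dot (continuous_id.sub continuous_const)
      (Continuous.matrix_mulVec continuous_const (continuous_id.sub continuous_const)))))

lemma gaussPdf_pos (S : Matrix (Fin n) (Fin n) ℝ) (hpd : S.PosDef) (m x : Fin n → ℝ) :
    0 < gaussPdf S m x := by
  unfold gaussPdf
  have h1 : (0:ℝ) < 2 * Real.pi := by positivity
  have h2 := hpd.det_pos
  positivity

lemma gaussPdf_comp (S : Matrix (Fin n) (Fin n) ℝ) (hpd : S.PosDef) (m y : Fin n → ℝ) :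
    gaussPdf S m (m + hpd.posSemidef.sqrt *ᵥ y)
      = (2 * Real.pi) ^ (-(n : ℝ) / 2) * S.det ^ (-(1 : ℝ) / 2) *
          Real.exp (-(1/2) * (y ⬝ᵥ y)) := by
  have hAsym := sqrt_isSymm S hpd
  unfold gaussPdf
  congr 3
  rw [add_sub_cancel_left, mulVec_mulVec, symm_mulVec_dot hAsym, mulVec_mulVec,
    ← Matrix.mul_assoc, sqrt_inv_sqrt S hpd, Matrix.one_mulVec]

lemma gaussPdf_integral_one (S : Matrix (Fin n) (Fin n) ℝ) (hpd : S.PosDef) (m : Fin n → ℝ) :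
    ∫ x, gaussPdf S m x = 1 := by
  set A := hpd.posSemidef.sqrt with hA
  have hdetA : A.det ≠ 0 := sqrt_det_ne S hpd
  rw [subst_integral A hdetA m (gaussPdf S m)]
  have : ∀ y : Fin n → ℝ, gaussPdf S m (m + A *ᵥ y)
      = (2 * Real.pi) ^ (-(n : ℝ) / 2) * S.det ^ (-(1 : ℝ) / 2) *
          Real.exp (-(2⁻¹:ℝ) * (y ⬝ᵥ y)) := by
    intro y; rw [gaussPdf_comp S hpd m y]; norm_num
  simp_rw [this]
  rw [integral_const_mul, integral_std, sqrt_abs_det S hpd, Real.sqrt_eq_rpow]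
  have hd := hpd.det_pos
  have h2p : (0:ℝ) < 2 * Real.pi := by positivity
  calc S.det ^ (1/2:ℝ) * ((2 * Real.pi) ^ (-(n:ℝ)/2) * S.det ^ (-(1:ℝ)/2)
        * (2 * Real.pi) ^ ((n:ℝ)/2))
      = (S.det ^ (1/2:ℝ) * S.det ^ (-(1:ℝ)/2)) *
        ((2 * Real.pi) ^ (-(n:ℝ)/2) * (2 * Real.pi) ^ ((n:ℝ)/2)) := by ring
    _ = 1 := by
        rw [← Real.rpow_add hd, ← Real.rpow_add h2p]
        simp [neg_div]

lemma gaussPdf_integrable (S : Matrix (Fin n) (Fin n) ℝ) (hpd : S.PosDef) (m : Fin n → ℝ) :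
    Integrable (gaussPdf S m) := by
  set A := hpd.posSemidef.sqrt with hA
  have hdetA : A.det ≠ 0 := sqrt_det_ne S hpd
  rw [subst_integrable A hdetA m (gaussPdf S m)]
  have : (fun y : Fin n → ℝ => gaussPdf S m (m + A *ᵥ y))
      = fun y : Fin n → ℝ => (2 * Real.pi) ^ (-(n : ℝ) / 2) * S.det ^ (-(1 : ℝ) / 2) *
          Real.exp (-(2⁻¹:ℝ) * (y ⬝ᵥ y)) := by
    funext y; rw [gaussPdf_comp S hpd m y]; norm_num
  rw [this]
  exact (integrable_std (by norm_num)).const_mul _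

end Stmt19

/-- Sandwich bound for the true normalizing constant of reward-guided
sampling. With `Z` the normalizing constant of the first-order tilted Gaussian
(tilt `g = ∇f(μ)`) and `Z*` the true one, if the Taylor remainder of `f` is bounded
by `(M/2)‖x-μ‖²` and `M‖Σ‖ < 1` (operator norm, ensuring finiteness of the upper
expectation), then
`Z·E[exp(-(M/2)‖X-μ‖²)] ≤ Z* ≤ Z·E[exp((M/2)‖X-μ‖²)]` with `X ~ N(μ+Σg, Σ)`. -/
theorem stmt_19 {n : ℕ} (S : Matrix (Fin n) (Fin n) ℝ)
    (hsym : S.IsSymm) (hpd : S.PosDef) (μ g : Fin n → ℝ)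
    (f : (Fin n → ℝ) → ℝ) (hf_meas : Measurable f) (M : ℝ) (hM : 0 ≤ M)
    (htaylor : ∀ x : Fin n → ℝ,
      |f x - f μ - (x - μ) ⬝ᵥ g| ≤ M / 2 * ((x - μ) ⬝ᵥ (x - μ)))
    (hMS : M * ‖Matrix.toEuclideanCLM (𝕜 := ℝ) S‖ < 1)
    (Z Zstar : ℝ)
    (hZ : Z = ∫ x : Fin n → ℝ,
      gaussPdf S μ x * Real.exp (f μ + (x - μ) ⬝ᵥ g))
    (hZstar : Zstar = ∫ x : Fin n → ℝ, gaussPdf S μ x * Real.exp (f x)) :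
    Z * (∫ x : Fin n → ℝ, gaussPdf S (μ + S *ᵥ g) x *
          Real.exp (-(M / 2) * ((x - μ) ⬝ᵥ (x - μ)))) ≤ Zstar ∧
    Zstar ≤ Z * (∫ x : Fin n → ℝ, gaussPdf S (μ + S *ᵥ g) x *
          Real.exp (M / 2 * ((x - μ) ⬝ᵥ (x - μ)))) := by
    classical
  have hAsym := Stmt19.sqrt_isSymm S hpd
  have hdetA := Stmt19.sqrt_det_ne S hpd
  set A := hpd.posSemidef.sqrt with hA
  have hdetS : IsUnit S.det := isUnit_iff_ne_zero.mpr (ne_of_gt hpd.det_pos)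
  set m : Fin n → ℝ := μ + S *ᵥ g with hm
  set c₀ : ℝ := f μ + (1/2) * (g ⬝ᵥ (S *ᵥ g)) with hc₀
  -- exponent identity
  have keyexp : ∀ x : Fin n → ℝ,
      (x - m) ⬝ᵥ (S⁻¹ *ᵥ (x - m))
        = (x - μ) ⬝ᵥ (S⁻¹ *ᵥ (x - μ)) - 2 * ((x - μ) ⬝ᵥ g) + g ⬝ᵥ (S *ᵥ g) := by
    intro x
    have hxm : x - m = (x - μ) - S *ᵥ g := by rw [hm, sub_add_eq_sub_sub]
    have hinv1 : S⁻¹ *ᵥ (S *ᵥ g) = g := by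
      rw [mulVec_mulVec, Matrix.nonsing_inv_mul _ hdetS, one_mulVec]
    have hinv2 : S *ᵥ (S⁻¹ *ᵥ (x - μ)) = x - μ := by
      rw [mulVec_mulVec, Matrix.mul_nonsing_inv _ hdetS, one_mulVec]
    have h3 : (S *ᵥ g) ⬝ᵥ (S⁻¹ *ᵥ (x - μ)) = (x - μ) ⬝ᵥ g := by
      rw [Stmt19.symm_mulVec_dot hsym, hinv2, dotProduct_comm]
    have h4 : (S *ᵥ g) ⬝ᵥ g = g ⬝ᵥ (S *ᵥ g) := dotProduct_comm _ _
    rw [hxm, Matrix.mulVec_sub, sub_dotProduct, dotProduct_sub, dotProduct_sub, hinv1, h3, h4]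
    ring
  -- tilted pdf identity
  have key : ∀ x, gaussPdf S μ x * Real.exp (f μ + (x - μ) ⬝ᵥ g)
      = Real.exp c₀ * gaussPdf S m x := by
    intro x
    unfold gaussPdf
    rw [mul_assoc ((2 * Real.pi) ^ (-(n:ℝ) / 2) * S.det ^ (-(1:ℝ) / 2)), ← Real.exp_add,
      mul_comm (Real.exp c₀),
      mul_assoc ((2 * Real.pi) ^ (-(n:ℝ) / 2) * S.det ^ (-(1:ℝ) / 2)), ← Real.exp_add]
    congr 2
    linear_combination (1/2 : ℝ) * keyexp x - hc₀
  -- value of Z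
  have hZval : Z = Real.exp c₀ := by
    rw [hZ]
    simp_rw [key]
    rw [integral_const_mul, Stmt19.gaussPdf_integral_one S hpd m, mul_one]
  -- constants
  set s : ℝ := ‖Matrix.toEuclideanCLM (𝕜 := ℝ) S‖ with hs
  have hs0 : 0 ≤ s := norm_nonneg _
  have hs'0 : 0 ≤ M * s := mul_nonneg hM hs0
  have hs'1 : M * s < 1 := hMS
  set t : ℝ := (1 - M * s) / (1 + M * s) with ht_def
  have ht : 0 < t := div_pos (by linarith) (by linarith)
  set c : ℝ := (1 - M * s) / (2 * (1 + M * s)) with hc_def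
  have hc : 0 < c := div_pos (by linarith) (by linarith)
  have hkey : M * s * (1 + t) = 1 - 2 * c := by
    rw [ht_def, hc_def]
    field_simp
    ring
  set C : ℝ := (2 * Real.pi) ^ (-(n : ℝ) / 2) * S.det ^ (-(1 : ℝ) / 2) with hCdef
  have hC : 0 < C := by
    have h1 : (0:ℝ) < 2 * Real.pi := by positivity
    have h2 := hpd.det_pos
    rw [hCdef]; positivity
  set u : Fin n → ℝ := S *ᵥ g with hu2
  have hAA : A * A = S := hpd.posSemidef.sqrt_mul_self
  -- pointwise bound on the transformed exponent
  have keybound : ∀ y : Fin n → ℝ,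
      -(1/2) * (y ⬝ᵥ y) + M / 2 * ((A *ᵥ y + u) ⬝ᵥ (A *ᵥ y + u))
        ≤ M / 2 * (1 + t⁻¹) * (u ⬝ᵥ u) + -c * (y ⬝ᵥ y) := by
    intro y
    have hq : (A *ᵥ y + u) ⬝ᵥ (A *ᵥ y + u)
        = (A *ᵥ y) ⬝ᵥ (A *ᵥ y) + 2 * ((A *ᵥ y) ⬝ᵥ u) + u ⬝ᵥ u := by
      rw [add_dotProduct, dotProduct_add, dotProduct_add, dotProduct_comm u (A *ᵥ y)]
      ring
    have h1 : (A *ᵥ y) ⬝ᵥ (A *ᵥ y) = y ⬝ᵥ (S *ᵥ y) := by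
      rw [Stmt19.symm_mulVec_dot hAsym, mulVec_mulVec, hAA]
    have h2 : y ⬝ᵥ (S *ᵥ y) ≤ s * (y ⬝ᵥ y) := Stmt19.dot_S_le S y
    have h3 := Stmt19.cross_le (A *ᵥ y) u ht
    rw [h1] at h3
    have hM2 : (0:ℝ) ≤ M / 2 := by linarith
    have hb1 : M / 2 * (2 * ((A *ᵥ y) ⬝ᵥ u))
        ≤ M / 2 * (t * (y ⬝ᵥ (S *ᵥ y)) + t⁻¹ * (u ⬝ᵥ u)) := mul_le_mul_of_nonneg_left h3 hM2
    have hb2 : M / 2 * ((1 + t) * (y ⬝ᵥ (S *ᵥ y))) ≤ M / 2 * ((1 + t) * (s * (y ⬝ᵥ y))) := by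
      apply mul_le_mul_of_nonneg_left _ hM2
      exact mul_le_mul_of_nonneg_left h2 (by linarith)
    have hco : M / 2 * ((1 + t) * (s * (y ⬝ᵥ y))) = (1/2 - c) * (y ⬝ᵥ y) := by
      have h5 : M / 2 * ((1 + t) * (s * (y ⬝ᵥ y))) = (M * s * (1 + t)) / 2 * (y ⬝ᵥ y) := by ring
      rw [h5, hkey]; ring
    rw [hq, h1]
    calc -(1/2) * (y ⬝ᵥ y) + M / 2 * ((y ⬝ᵥ (S *ᵥ y))
            + 2 * ((A *ᵥ y) ⬝ᵥ u) + u ⬝ᵥ u)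
        = -(1/2) * (y ⬝ᵥ y) + M / 2 * (y ⬝ᵥ (S *ᵥ y)) + M / 2 * (2 * ((A *ᵥ y) ⬝ᵥ u))
            + M / 2 * (u ⬝ᵥ u) := by ring
      _ ≤ -(1/2) * (y ⬝ᵥ y) + M / 2 * (y ⬝ᵥ (S *ᵥ y))
            + M / 2 * (t * (y ⬝ᵥ (S *ᵥ y)) + t⁻¹ * (u ⬝ᵥ u)) + M / 2 * (u ⬝ᵥ u) := by
          linarith [hb1]
      _ = -(1/2) * (y ⬝ᵥ y) + M / 2 * ((1 + t) * (y ⬝ᵥ (S *ᵥ y)))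
            + M / 2 * (1 + t⁻¹) * (u ⬝ᵥ u) := by ring
      _ ≤ -(1/2) * (y ⬝ᵥ y) + (1/2 - c) * (y ⬝ᵥ y) + M / 2 * (1 + t⁻¹) * (u ⬝ᵥ u) := by
          have hb2' := hb2; rw [hco] at hb2'; linarith
      _ = M / 2 * (1 + t⁻¹) * (u ⬝ᵥ u) + -c * (y ⬝ᵥ y) := by ring
  -- integrability of the three integrands
  have hcont_q : Continuous fun x : Fin n → ℝ => (x - μ) ⬝ᵥ (x - μ) :=
    Stmt19.cont_dot (continuous_id.sub continuous_const) (continuous_id.sub continuous_const)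
  have hGm : Integrable (gaussPdf S m) := Stmt19.gaussPdf_integrable S hpd m
  have hUB : Integrable (fun x : Fin n → ℝ =>
      gaussPdf S m x * Real.exp (M / 2 * ((x - μ) ⬝ᵥ (x - μ)))) := by
    rw [Stmt19.subst_integrable A hdetA m]
    have hrw : ∀ y : Fin n → ℝ, gaussPdf S m (m + A *ᵥ y) *
        Real.exp (M / 2 * ((m + A *ᵥ y - μ) ⬝ᵥ (m + A *ᵥ y - μ)))
        = C * Real.exp (-(1/2) * (y ⬝ᵥ y) + M / 2 * ((A *ᵥ y + u) ⬝ᵥ (A *ᵥ y + u))) := by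
      intro y
      have hxmu : m + A *ᵥ y - μ = A *ᵥ y + u := by rw [hm]; abel
      have hgc : gaussPdf S m (m + A *ᵥ y) = C * Real.exp (-(1/2) * (y ⬝ᵥ y)) :=
        Stmt19.gaussPdf_comp S hpd m y
      rw [hxmu, hgc, mul_assoc, ← Real.exp_add]
    rw [show (fun y : Fin n → ℝ => gaussPdf S m (m + A *ᵥ y) *
        Real.exp (M / 2 * ((m + A *ᵥ y - μ) ⬝ᵥ (m + A *ᵥ y - μ))))
        = fun y : Fin n → ℝ =>
          C * Real.exp (-(1/2) * (y ⬝ᵥ y) + M / 2 * ((A *ᵥ y + u) ⬝ᵥ (A *ᵥ y + u)))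
      from funext hrw]
    apply Integrable.mono'
      (g := fun y : Fin n → ℝ =>
        (C * Real.exp (M / 2 * (1 + t⁻¹) * (u ⬝ᵥ u))) * Real.exp (-c * (y ⬝ᵥ y)))
      ((Stmt19.integrable_std hc).const_mul _)
    · apply Continuous.aestronglyMeasurable
      apply continuous_const.mul
      apply Real.continuous_exp.comp
      apply Continuous.add
      · exact continuous_const.mul (Stmt19.cont_dot continuous_id continuous_id)
      · apply continuous_const.mul
        exact Stmt19.cont_dot
          ((Continuous.matrix_mulVec continuous_const continuous_id).add continuous_const)
          ((Continuous.matrix_mulVec continuous_const continuous_id).add continuous_const)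
    · filter_upwards with y
      rw [Real.norm_eq_abs, abs_of_nonneg (by positivity)]
      have hstep : C * Real.exp (M / 2 * (1 + t⁻¹) * (u ⬝ᵥ u)) * Real.exp (-c * (y ⬝ᵥ y))
          = C * Real.exp (M / 2 * (1 + t⁻¹) * (u ⬝ᵥ u) + -c * (y ⬝ᵥ y)) := by
        rw [mul_assoc, ← Real.exp_add]
      rw [hstep]
      exact mul_le_mul_of_nonneg_left (Real.exp_le_exp.mpr (keybound y)) hC.le
  have hLB : Integrable (fun x : Fin n → ℝ =>
      gaussPdf S m x * Real.exp (-(M / 2) * ((x - μ) ⬝ᵥ (x - μ)))) := by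
    apply Integrable.mono' hGm
    · exact ((Stmt19.cont_gaussPdf S m).mul
        (Real.continuous_exp.comp (continuous_const.mul hcont_q))).aestronglyMeasurable
    · filter_upwards with x
      rw [Real.norm_eq_abs,
        abs_of_nonneg (mul_nonneg (Stmt19.gaussPdf_pos S hpd m x).le (Real.exp_nonneg _))]
      nth_rewrite 2 [← mul_one (gaussPdf S m x)]
      apply mul_le_mul_of_nonneg_left _ (Stmt19.gaussPdf_pos S hpd m x).le
      rw [Real.exp_le_one_iff]
      nlinarith [Stmt19.dot_self_nonneg' (x - μ), hM]
  -- pointwise sandwich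
  have hsplit : ∀ x : Fin n → ℝ, Real.exp (f x)
      = Real.exp (f μ + (x - μ) ⬝ᵥ g) * Real.exp (f x - f μ - (x - μ) ⬝ᵥ g) := by
    intro x; rw [← Real.exp_add]; congr 1; ring
  have hptU : ∀ x, gaussPdf S μ x * Real.exp (f x)
      ≤ Real.exp c₀ * (gaussPdf S m x * Real.exp (M / 2 * ((x - μ) ⬝ᵥ (x - μ)))) := by
    intro x
    rw [hsplit x, ← mul_assoc, key x, mul_assoc]
    apply mul_le_mul_of_nonneg_left _ (Real.exp_nonneg _)
    apply mul_le_mul_of_nonneg_left _ (Stmt19.gaussPdf_pos S hpd m x).le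
    exact Real.exp_le_exp.mpr (abs_le.mp (htaylor x)).2
  have hptL : ∀ x, Real.exp c₀ * (gaussPdf S m x * Real.exp (-(M / 2) * ((x - μ) ⬝ᵥ (x - μ))))
      ≤ gaussPdf S μ x * Real.exp (f x) := by
    intro x
    rw [hsplit x, ← mul_assoc (gaussPdf S μ x), key x, mul_assoc]
    apply mul_le_mul_of_nonneg_left _ (Real.exp_nonneg _)
    apply mul_le_mul_of_nonneg_left _ (Stmt19.gaussPdf_pos S hpd m x).le
    apply Real.exp_le_exp.mpr
    have h6 := (abs_le.mp (htaylor x)).1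
    linarith [h6]
  have hstar : Integrable (fun x : Fin n → ℝ => gaussPdf S μ x * Real.exp (f x)) := by
    apply Integrable.mono' (hUB.const_mul (Real.exp c₀))
    · exact ((Stmt19.cont_gaussPdf S μ).measurable.mul hf_meas.exp).aestronglyMeasurable
    · filter_upwards with x
      rw [Real.norm_eq_abs,
        abs_of_nonneg (mul_nonneg (Stmt19.gaussPdf_pos S hpd μ x).le (Real.exp_nonneg _))]
      exact hptU x
  constructor
  · rw [hZval, hZstar, ← integral_const_mul]
    exact integral_mono (hLB.const_mul _) hstar hptL
  · rw [hZval, hZstar, ← integral_const_mul]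
    exact integral_mono hstar (hUB.const_mul _) hptU
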